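/- In the formal power series ring ℤ[[q]], ∑_{n≥0} PDO(n) q^n = f_4 f_6² / (f_1 f_3 f_{12}), where the denominator factors are units since each has constant term 1. -/

import Mathlib

/-- The number of PDO (designated-summand) versions of a partition: the product of the
multiplicities of its distinct part sizes. -/
def pdoWeight {n : ℕ} (l : n.Partition) : ℕ :=
  ∏ a ∈ l.parts.toFinset, l.parts.count a

/-- `PDO n` is the number of partitions of `n` into odd parts with designated summands. -/
def PDO (n : ℕ) : ℕ :=
  ∑ l ∈ Nat.Partition.odds n, pdoWeight l

/-- `f r = ∏_{n ≥ 1} (1 - q^{r n})` in `ℤ[[q]]`, defined coefficientwise: the coefficient of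
`q^n` agrees with that of every sufficiently long partial product (for `r ≥ 1`, the factors with
index beyond `n` do not affect the coefficient of `q^n`). -/
noncomputable def f (r : ℕ) : PowerSeries ℤ :=
  PowerSeries.mk fun n =>
    PowerSeries.coeff (R := ℤ) n
      (∏ i ∈ Finset.range (n + 1), (1 - (PowerSeries.X : PowerSeries ℤ) ^ (r * (i + 1))))

open PowerSeries Finset Finset.HasAntidiagonal

noncomputable def PP (F : ℕ → PowerSeries ℤ) : PowerSeries ℤ :=
  PowerSeries.mk fun n => PowerSeries.coeff (R := ℤ) n (∏ i ∈ Finset.range (n + 1), F i)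

def Good (F : ℕ → PowerSeries ℤ) : Prop :=
  ∀ i b, b ≤ i → PowerSeries.coeff (R := ℤ) b (F i) = if b = 0 then 1 else 0

lemma coeff_mul_of_triv {h g : PowerSeries ℤ} {n : ℕ}
    (hg : ∀ b, b ≤ n → coeff (R := ℤ) b g = if b = 0 then 1 else 0) :
    coeff (R := ℤ) n (h * g) = coeff (R := ℤ) n h := by
  rw [coeff_mul]
  rw [Finset.sum_eq_single_of_mem (n, 0) (by simp)]
  · rw [hg 0 (Nat.zero_le n)]; simp
  · rintro ⟨a, b⟩ hab hne
    rw [Finset.HasAntidiagonal.mem_antidiagonal] at hab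
    have hb : b ≤ n := by omega
    rw [hg b hb]
    have : b ≠ 0 := by rintro rfl; exact hne (by simp; omega)
    simp [this]

lemma stab {F : ℕ → PowerSeries ℤ} (hF : Good F) {n m : ℕ} (hm : n < m) :
    coeff (R := ℤ) n (∏ i ∈ range m, F i) = coeff (R := ℤ) n (∏ i ∈ range (n + 1), F i) := by
  induction m, hm using Nat.le_induction with
  | base => rfl
  | succ m hm ih =>
    rw [Finset.prod_range_succ, coeff_mul_of_triv fun b hb => hF m b (by omega)]
    exact ih

lemma coeff_PP {F : ℕ → PowerSeries ℤ} (hF : Good F) {n m : ℕ} (hm : n < m) :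
    coeff (R := ℤ) n (PP F) = coeff (R := ℤ) n (∏ i ∈ range m, F i) := by
  rw [PP, coeff_mk, stab hF hm]

lemma PP_mul {F G : ℕ → PowerSeries ℤ} (hF : Good F) (hG : Good G) :
    PP (fun i => F i * G i) = PP F * PP G := by
  ext n
  rw [PP, coeff_mk, Finset.prod_mul_distrib, coeff_mul, coeff_mul]
  apply Finset.sum_congr rfl
  rintro ⟨a, b⟩ hab
  rw [Finset.HasAntidiagonal.mem_antidiagonal] at hab
  rw [coeff_PP hF (show a < n + 1 by omega), coeff_PP hG (show b < n + 1 by omega)]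

lemma pair_prod (G : ℕ → PowerSeries ℤ) (m : ℕ) :
    ∏ j ∈ range (2 * m), G j = ∏ i ∈ range m, (G (2 * i) * G (2 * i + 1)) := by
  induction m with
  | zero => simp
  | succ m ih =>
    rw [show 2 * (m + 1) = 2 * m + 1 + 1 by ring, Finset.prod_range_succ,
      Finset.prod_range_succ, Finset.prod_range_succ, ih, mul_assoc]

lemma PP_pair {G : ℕ → PowerSeries ℤ} (hG : Good G) :
    PP (fun i => G (2 * i) * G (2 * i + 1)) = PP G := by
  ext n
  rw [PP, coeff_mk, ← pair_prod, stab hG (show n < 2 * (n + 1) by omega), PP, coeff_mk]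

noncomputable def gser (a : ℕ) : PowerSeries ℤ :=
  PowerSeries.mk fun j => if j = 0 then 1 else if a ∣ j then (j / a : ℕ) else 0

noncomputable def sser (a : ℕ) : PowerSeries ℤ :=
  PowerSeries.mk fun j => if j = 0 then 1 else if a ∣ j ∧ 2 * a ≤ j then 1 else 0

lemma coeff_mul_one_sub_pow (h : PowerSeries ℤ) (a n : ℕ) :
    coeff (R := ℤ) n (h * (1 - X ^ a)) = coeff (R := ℤ) n h - (if a ≤ n then coeff (R := ℤ) (n - a) h else 0) := by
  rw [mul_sub, mul_one, map_sub, PowerSeries.coeff_mul_X_pow']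

lemma not_dvd_sub {a n : ℕ} (hd : ¬ a ∣ n) (h : a ≤ n) : ¬ a ∣ (n - a) := by
  rintro ⟨c, hc⟩
  exact hd ⟨c + 1, by rw [Nat.mul_succ]; omega⟩

lemma gser_mul (a : ℕ) (ha : 0 < a) : gser a * (1 - X ^ a) = sser a := by
  ext n
  rw [coeff_mul_one_sub_pow, gser, sser, coeff_mk, coeff_mk, coeff_mk]
  rcases Nat.eq_zero_or_pos n with rfl | hn
  · simp [show ¬ a ≤ 0 by omega]
  by_cases hd : a ∣ n
  · obtain ⟨k, rfl⟩ := hd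
    have hk : 0 < k := Nat.pos_of_ne_zero fun h => by subst h; simp at hn
    obtain ⟨j, rfl⟩ : ∃ j, k = j + 1 := ⟨k - 1, by omega⟩
    have hrw : a * (j + 1) = a * j + a := by ring
    rw [hrw] at hn ⊢
    have hsub : a * j + a - a = a * j := by omega
    have hdvd : a ∣ a * j + a := ⟨j + 1, by rw [hrw]⟩
    have hdiv : (a * j + a) / a = j + 1 := by
      rw [← hrw, Nat.mul_div_cancel_left _ ha]
    rw [if_neg hn.ne', if_pos hdvd, hdiv, if_pos (show a ≤ a * j + a by omega), hsub,
      if_neg hn.ne']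
    rcases Nat.eq_zero_or_pos j with rfl | hj
    · simp only [mul_zero, zero_add] at *
      rw [if_pos trivial, if_neg (show ¬ (a ∣ a ∧ 2 * a ≤ a) from fun h => by omega)]
      norm_num
    · have haj : a ≤ a * j := Nat.le_mul_of_pos_right a hj
      rw [if_neg (show a * j ≠ 0 by omega), if_pos (show a ∣ a * j from Dvd.intro j rfl),
        Nat.mul_div_cancel_left _ ha,
        if_pos (show a ∣ a * j + a ∧ 2 * a ≤ a * j + a from ⟨hdvd, by omega⟩)]
      push_cast; ring
  · rw [if_neg hn.ne', if_neg hd,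
      if_neg (show ¬ (a ∣ n ∧ 2 * a ≤ n) from fun h => hd h.1), if_neg hn.ne']
    split_ifs with hle hz hdd
    · exact absurd ⟨1, by omega⟩ hd
    · exact absurd hdd (not_dvd_sub hd hle)
    · ring
    · ring

lemma sser_mul (a : ℕ) (ha : 0 < a) : sser a * (1 - X ^ a) = 1 - X ^ a + X ^ (2 * a) := by
  ext n
  rw [coeff_mul_one_sub_pow, sser, coeff_mk, map_add, map_sub, coeff_one,
    coeff_X_pow, coeff_X_pow, coeff_mk]
  rcases Nat.eq_zero_or_pos n with rfl | hn
  · rw [if_pos rfl, if_neg (show ¬ a ≤ 0 by omega), if_pos rfl,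
      if_neg (show ¬ (0 : ℕ) = a by omega), if_neg (show ¬ (0 : ℕ) = 2 * a by omega)]
    ring
  by_cases hd : a ∣ n
  · obtain ⟨k, rfl⟩ := hd
    have hk : 0 < k := Nat.pos_of_ne_zero fun h => by subst h; simp at hn
    obtain ⟨j, rfl⟩ : ∃ j, k = j + 1 := ⟨k - 1, by omega⟩
    have hrw : a * (j + 1) = a * j + a := by ring
    rw [hrw] at hn ⊢
    have hsub : a * j + a - a = a * j := by omega
    have hdvd : a ∣ a * j + a := ⟨j + 1, by rw [hrw]⟩
    rw [if_neg hn.ne', if_pos (show a ≤ a * j + a by omega), hsub, if_neg hn.ne']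
    rcases Nat.eq_zero_or_pos j with rfl | hj
    · simp only [mul_zero, zero_add] at *
      rw [if_neg (show ¬ (a ∣ a ∧ 2 * a ≤ a) from fun h => by omega), if_pos trivial,
        if_pos trivial, if_neg (show ¬ a = 2 * a by omega)]
      ring
    · have haj : a ≤ a * j := Nat.le_mul_of_pos_right a hj
      rw [if_pos (show a ∣ a * j + a ∧ 2 * a ≤ a * j + a from ⟨hdvd, by omega⟩),
        if_neg (show a * j ≠ 0 by omega), if_neg (show ¬ a * j + a = a by omega)]
      rcases Nat.eq_or_lt_of_le hj with hj1 | hj2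
      · have hj1' : j = 1 := hj1.symm
        subst hj1'
        rw [if_neg (show ¬ (a ∣ a * 1 ∧ 2 * a ≤ a * 1) from fun h => by omega),
          if_pos (show a * 1 + a = 2 * a by ring)]
        ring
      · have h2a : 2 * a ≤ a * j := by
          calc 2 * a = a * 2 := by ring
          _ ≤ a * j := Nat.mul_le_mul_left a (by omega)
        rw [if_pos (show a ∣ a * j ∧ 2 * a ≤ a * j from ⟨Dvd.intro j rfl, h2a⟩),
          if_neg (show ¬ a * j + a = 2 * a by omega)]
        ring
  · have h1 : ¬ n = a := fun h => hd (h ▸ dvd_refl a)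
    have h2 : ¬ n = 2 * a := fun h => hd (by rw [h]; exact ⟨2, by ring⟩)
    rw [if_neg hn.ne', if_neg (show ¬ (a ∣ n ∧ 2 * a ≤ n) from fun h => hd h.1),
      if_neg hn.ne', if_neg h1, if_neg h2]
    split_ifs with hle hz hdd
    · exact absurd ⟨1, by omega⟩ hd
    · exact absurd hdd.1 (not_dvd_sub hd hle)
    · ring
    · ring

open scoped Classical in
theorem weighted_prop (n : ℕ) (s : Finset ℕ) (hs : ∀ i ∈ s, 0 < i) :
    (∑ p ∈ Finset.univ.filter
        (fun p : n.Partition => ∀ j ∈ p.parts, j ∈ s), (pdoWeight p : ℤ)) =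
      coeff (R := ℤ) n (∏ i ∈ s, gser i) := by
  rw [coeff_prod]
  rw [← Finset.sum_filter_of_ne
    (p := fun l : ℕ →₀ ℕ => ∀ i ∈ s, i ∣ l i)
    (fun l _ hl i hi => by
      by_contra hdvd
      apply hl
      apply Finset.prod_eq_zero hi
      rw [gser, coeff_mk, if_neg (fun h0 => hdvd (by rw [h0]; exact dvd_zero i)), if_neg hdvd])]
  set φ : (p : n.Partition) →
      p ∈ Finset.univ.filter (fun p : n.Partition => ∀ j ∈ p.parts, j ∈ s) → (ℕ →₀ ℕ) :=
    fun p _ => {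
      toFun := fun i => p.parts.count i * i
      support := Finset.filter (fun i => i ≠ 0) p.parts.toFinset
      mem_support_toFun := fun a => by
        simp only [ne_eq, mul_eq_zero, Multiset.count_eq_zero, mem_filter,
          Multiset.mem_toFinset, not_or, not_not] }
  refine Finset.sum_bij φ ?_ ?_ ?_ ?_
  · -- maps into the filtered antidiagonal
    intro p hp
    simp only [mem_filter, mem_univ, true_and] at hp
    simp only [φ, mem_filter, mem_finsuppAntidiag, Finsupp.coe_mk]
    refine ⟨⟨?_, ?_⟩, fun i _ => dvd_mul_left i _⟩
    · conv_rhs => rw [← p.parts_sum]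
      rw [sum_multiset_count_of_subset p.parts s (fun i hi => by
        rw [Multiset.mem_toFinset] at hi; exact hp i hi)]
      simp [mul_comm]
    · intro i hi
      exact hp i (Multiset.mem_toFinset.mp (Finset.mem_filter.mp hi).1)
  · -- injectivity
    intro p₁ hp₁ p₂ hp₂ h
    simp only [mem_filter, mem_univ, true_and] at hp₁ hp₂
    apply Nat.Partition.ext
    ext i
    simp only [φ, Finsupp.mk.injEq] at h
    by_cases hi : i = 0
    · subst hi
      rw [Multiset.count_eq_zero_of_notMem fun a => Nat.lt_irrefl 0 (hs 0 (hp₁ 0 a)),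
        Multiset.count_eq_zero_of_notMem fun a => Nat.lt_irrefl 0 (hs 0 (hp₂ 0 a))]
    · rw [← mul_left_inj' hi]
      rw [funext_iff] at h
      exact h.2 i
  · -- surjectivity
    rintro l hl
    simp only [mem_filter, mem_finsuppAntidiag] at hl
    obtain ⟨⟨hsum, hsupp⟩, hdvd⟩ := hl
    refine ⟨⟨∑ i ∈ s, Multiset.replicate (l i / i) i, ?_, ?_⟩, ?_, ?_⟩
    · intro i hi
      rw [Multiset.mem_sum] at hi
      obtain ⟨t, ht, hrep⟩ := hi
      rw [Multiset.eq_of_mem_replicate hrep]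
      exact hs t ht
    · simp_rw [Multiset.sum_sum, Multiset.sum_replicate, Nat.nsmul_eq_mul]
      rw [← hsum]
      exact Finset.sum_congr rfl fun i hi => Nat.div_mul_cancel (hdvd i hi)
    · simp only [mem_filter, mem_univ, true_and]
      intro j hj
      rw [Multiset.mem_sum] at hj
      obtain ⟨t, ht, hrep⟩ := hj
      rw [Multiset.eq_of_mem_replicate hrep]
      exact ht
    · ext i
      simp only [φ, Finsupp.coe_mk]
      simp_rw [Multiset.count_sum', Multiset.count_replicate, Finset.sum_ite_eq']
      split_ifs with h
      · first
        | exact Nat.div_mul_cancel (hdvd i h)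
        | exact (Nat.div_mul_cancel (hdvd i h)).symm
      · rw [zero_mul]
        first
        | exact Finsupp.notMem_support_iff.mp fun hc => h (hsupp hc)
        | exact (Finsupp.notMem_support_iff.mp fun hc => h (hsupp hc)).symm
  · -- weights agree
    intro p hp
    simp only [mem_filter, mem_univ, true_and] at hp
    simp only [φ, Finsupp.coe_mk]
    have hfac : ∀ i ∈ s, coeff (R := ℤ) (p.parts.count i * i) (gser i)
        = if p.parts.count i = 0 then 1 else (p.parts.count i : ℤ) := by
      intro i hi
      rw [gser, coeff_mk]
      rcases Nat.eq_zero_or_pos (p.parts.count i) with hc | hc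
      · simp [hc]
      · rw [if_neg (Nat.mul_ne_zero hc.ne' (hs i hi).ne'),
          if_pos (dvd_mul_left i _), Nat.mul_div_cancel _ (hs i hi), if_neg hc.ne']
    rw [Finset.prod_congr rfl hfac, pdoWeight]
    push_cast
    rw [← Finset.prod_subset (show p.parts.toFinset ⊆ s from fun i hi => by
        rw [Multiset.mem_toFinset] at hi; exact hp i hi)
      (fun i _ hi => by
        rw [Multiset.mem_toFinset] at hi
        rw [if_pos (by rwa [Multiset.count_eq_zero])])]
    apply Finset.prod_congr rfl
    intro i hi
    rw [Multiset.mem_toFinset] at hi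
    rw [if_neg (by rwa [← Multiset.count_pos, Nat.pos_iff_ne_zero] at hi)]

-- ===== Good instances =====

lemma good_one_sub (e : ℕ → ℕ) (he : ∀ i, i < e i) :
    Good (fun i => 1 - (X : PowerSeries ℤ) ^ (e i)) := by
  intro i b hb
  rw [map_sub, coeff_one, coeff_X_pow, if_neg (show ¬ b = e i by have := he i; omega), sub_zero]

lemma good_one_add (e : ℕ → ℕ) (he : ∀ i, i < e i) :
    Good (fun i => 1 + (X : PowerSeries ℤ) ^ (e i)) := by
  intro i b hb
  rw [map_add, coeff_one, coeff_X_pow, if_neg (show ¬ b = e i by have := he i; omega), add_zero]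

lemma good_A : Good (fun i => 1 - (X : PowerSeries ℤ) ^ (2 * i + 1)
    + X ^ (2 * (2 * i + 1))) := by
  intro i b hb
  rw [map_add, map_sub, coeff_one, coeff_X_pow, coeff_X_pow,
    if_neg (show ¬ b = 2 * i + 1 by omega), if_neg (show ¬ b = 2 * (2 * i + 1) by omega),
    sub_zero, add_zero]

lemma good_gser : Good (fun i => gser (2 * i + 1)) := by
  intro i b hb
  simp only [gser, coeff_mk]
  rcases Nat.eq_zero_or_pos b with rfl | hb0
  · simp
  · rw [if_neg hb0.ne', if_neg (fun hdvd =>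
      absurd (Nat.le_of_dvd hb0 hdvd) (by omega)), if_neg hb0.ne']

lemma good_sser : Good (fun i => sser (2 * i + 1)) := by
  intro i b hb
  simp only [sser, coeff_mk]
  rcases Nat.eq_zero_or_pos b with rfl | hb0
  · simp
  · rw [if_neg hb0.ne', if_neg (fun hdvd =>
      absurd (Nat.le_of_dvd hb0 hdvd.1) (by omega)), if_neg hb0.ne']

-- ===== polynomial identities =====

lemma poly2 (a : ℕ) :
    (1 + (X : PowerSeries ℤ) ^ a) * (1 - X ^ a) = 1 - X ^ (2 * a) := by
  rw [show 2 * a = a * 2 by ring, pow_mul]; ring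

lemma poly3 (a : ℕ) :
    (1 - (X : PowerSeries ℤ) ^ a + X ^ (2 * a)) * (1 + X ^ a) = 1 + X ^ (3 * a) := by
  rw [show 2 * a = a * 2 by ring, show 3 * a = a * 3 by ring, pow_mul, pow_mul]; ring

-- ===== the named series =====

noncomputable def Tser (r : ℕ) : PowerSeries ℤ :=
  PP (fun i => 1 + X ^ (r * (i + 1)))

lemma hf_PP (r : ℕ) : f r = PP (fun i => 1 - X ^ (r * (i + 1))) := rfl

lemma good_fF (r : ℕ) (hr : 0 < r) : Good (fun i => 1 - (X : PowerSeries ℤ) ^ (r * (i + 1))) :=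
  good_one_sub _ fun i => by have := Nat.le_mul_of_pos_left (i + 1) hr; omega

lemma good_tF (r : ℕ) (hr : 0 < r) : Good (fun i => 1 + (X : PowerSeries ℤ) ^ (r * (i + 1))) :=
  good_one_add _ fun i => by have := Nat.le_mul_of_pos_left (i + 1) hr; omega

lemma good_fO (r : ℕ) (hr : 0 < r) :
    Good (fun i => 1 - (X : PowerSeries ℤ) ^ (r * (2 * i + 1))) :=
  good_one_sub _ fun i => by have := Nat.le_mul_of_pos_left (2 * i + 1) hr; omega

lemma good_tO (r : ℕ) (hr : 0 < r) :
    Good (fun i => 1 + (X : PowerSeries ℤ) ^ (r * (2 * i + 1))) :=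
  good_one_add _ fun i => by have := Nat.le_mul_of_pos_left (2 * i + 1) hr; omega

-- T r * f r = f (2 r)
lemma tf (r : ℕ) (hr : 0 < r) : Tser r * f r = f (2 * r) := by
  rw [Tser, hf_PP, ← PP_mul (good_tF r hr) (good_fF r hr), hf_PP]
  exact congr_arg PP (funext fun i => by
    rw [poly2, show 2 * (r * (i + 1)) = 2 * r * (i + 1) by ring])

-- f r = C_r * f (2 r)
lemma f_split (r : ℕ) (hr : 0 < r) :
    f r = PP (fun i => 1 - X ^ (r * (2 * i + 1))) * f (2 * r) := by
  rw [hf_PP r, ← PP_pair (good_fF r hr), hf_PP (2 * r),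
    ← PP_mul (good_fO r hr) (good_fF (2 * r) (by omega))]
  exact congr_arg PP (funext fun i => by
    rw [show r * (2 * i + 1 + 1) = 2 * r * (i + 1) by ring])

-- T r = D_r * T (2 r)
lemma t_split (r : ℕ) (hr : 0 < r) :
    Tser r = PP (fun i => 1 + X ^ (r * (2 * i + 1))) * Tser (2 * r) := by
  rw [Tser, ← PP_pair (good_tF r hr), Tser,
    ← PP_mul (good_tO r hr) (good_tF (2 * r) (by omega))]
  exact congr_arg PP (funext fun i => by
    rw [show r * (2 * i + 1 + 1) = 2 * r * (i + 1) by ring])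

-- the PDO generating series equals PP of the gser family
lemma mk_PDO_eq : PowerSeries.mk (fun n => (PDO n : ℤ)) = PP (fun i => gser (2 * i + 1)) := by
  classical
  ext n
  rw [PP, coeff_mk, coeff_mk]
  have hprod : (∏ i ∈ range (n + 1), gser (2 * i + 1)) =
      ∏ i ∈ (range (n + 1)).map ⟨fun i => 2 * i + 1, fun x y h => by dsimp at h; omega⟩, gser i := by
    rw [Finset.prod_map]; rfl
  rw [hprod, ← weighted_prop n _ (by
    intro i hi
    simp only [Finset.mem_map, Function.Embedding.coeFn_mk] at hi
    obtain ⟨a, -, rfl⟩ := hi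
    exact Nat.succ_pos _)]
  rw [PDO]
  have hset : Nat.Partition.odds n =
      Finset.univ.filter (fun p : n.Partition => ∀ j ∈ p.parts,
        j ∈ (range (n + 1)).map ⟨fun i => 2 * i + 1, fun x y h => by dsimp at h; omega⟩) := by
    ext p
    simp only [Nat.Partition.odds, Nat.Partition.restricted, Finset.mem_filter, Finset.mem_univ, true_and]
    apply forall₂_congr
    intro j hj
    constructor
    · intro hodd
      have hjn : j ≤ n := by
        simpa [p.parts_sum] using Multiset.single_le_sum (fun _ _ => Nat.zero_le _) _ hj
      rw [Nat.not_even_iff] at hodd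
      simp only [Finset.mem_map, Function.Embedding.coeFn_mk, Finset.mem_range]
      exact ⟨j / 2, by omega, by show 2 * (j / 2) + 1 = j; omega⟩
    · intro hmem
      obtain ⟨a, -, ha⟩ := Finset.mem_map.mp hmem
      change 2 * a + 1 = j at ha
      rw [Nat.even_iff]
      omega
  rw [hset]
  push_cast
  rfl

-- constant coefficients
lemma coeff_zero_PP {F : ℕ → PowerSeries ℤ} (hF : Good F) : coeff (R := ℤ) 0 (PP F) = 1 := by
  rw [coeff_PP hF (show 0 < 1 by omega), Finset.prod_range_one, hF 0 0 le_rfl, if_pos rfl]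

lemma coeff_zero_f (r : ℕ) (hr : 0 < r) : coeff (R := ℤ) 0 (f r) = 1 := by
  rw [hf_PP]; exact coeff_zero_PP (good_fF r hr)

lemma f_ne_zero (r : ℕ) (hr : 0 < r) : f r ≠ 0 := fun h => by
  have := coeff_zero_f r hr
  rw [h, map_zero] at this
  norm_num at this


/-- `∑_{n ≥ 0} PDO(n) q^n = f_4 f_6^2 / (f_1 f_3 f_12)` in `ℤ[[q]]`; the denominator is a unit
(constant term `1`), and `Ring.inverse` gives its genuine inverse. -/
theorem pdo_genFun :
    PowerSeries.mk (fun n => (PDO n : ℤ)) =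
      f 4 * f 6 ^ 2 * Ring.inverse (f 1 * f 3 * f 12) := by
  set Gg : PowerSeries ℤ := PP (fun i => gser (2 * i + 1)) with hGg
  set Cc : PowerSeries ℤ := PP (fun i => 1 - X ^ (1 * (2 * i + 1))) with hCc
  set Bb : PowerSeries ℤ := PP (fun i => 1 + X ^ (1 * (2 * i + 1))) with hBb
  set Dd : PowerSeries ℤ := PP (fun i => 1 + X ^ (3 * (2 * i + 1))) with hDd
  set Aa : PowerSeries ℤ := PP (fun i => 1 - X ^ (2 * i + 1) + X ^ (2 * (2 * i + 1))) with hAa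
  -- E1 : Gg * Cc * Cc = Aa
  have e1 : Gg * Cc * Cc = Aa := by
    rw [hGg, hCc, ← PP_mul good_gser (good_fO 1 one_pos)]
    have h1 : PP (fun i => gser (2 * i + 1) * (1 - X ^ (1 * (2 * i + 1)))) =
        PP (fun i => sser (2 * i + 1)) :=
      congr_arg PP (funext fun i => by
        rw [one_mul, gser_mul (2 * i + 1) (by omega)])
    rw [h1, ← PP_mul good_sser (good_fO 1 one_pos), hAa]
    exact congr_arg PP (funext fun i => by
      rw [one_mul, sser_mul (2 * i + 1) (by omega)])
  -- E2 : Aa * Bb = Dd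
  have e2 : Aa * Bb = Dd := by
    rw [hAa, hBb, ← PP_mul good_A (good_tO 1 one_pos), hDd]
    exact congr_arg PP (funext fun i => by rw [one_mul, poly3])
  -- E3 : Cc * f 2 = f 1
  have e3 : Cc * f 2 = f 1 := by
    have h := f_split 1 one_pos
    rw [← hCc] at h
    norm_num at h
    exact h.symm
  -- E4
  have e41 : Tser 1 * f 1 = f 2 := by
    have := tf 1 one_pos; rwa [(by norm_num : 2 * 1 = 2)] at this
  have e42 : Tser 2 * f 2 = f 4 := by
    have := tf 2 (by omega); rwa [(by norm_num : 2 * 2 = 4)] at this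
  have e43 : Tser 3 * f 3 = f 6 := by
    have := tf 3 (by omega); rwa [(by norm_num : 2 * 3 = 6)] at this
  have e46 : Tser 6 * f 6 = f 12 := by
    have := tf 6 (by omega); rwa [(by norm_num : 2 * 6 = 12)] at this
  -- E5 : Tser 1 = Bb * Tser 2
  have e5 : Tser 1 = Bb * Tser 2 := by
    have h := t_split 1 one_pos
    rw [← hBb] at h
    norm_num at h
    exact h
  -- E6 : Tser 3 = Dd * Tser 6
  have e6 : Tser 3 = Dd * Tser 6 := by
    have h := t_split 3 (by omega)
    rw [← hDd] at h
    norm_num at h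
    exact h
  have hBD : Gg * Cc * Cc * Bb = Dd := by rw [e1]; exact e2
  have h2 : Dd * (f 3 * f 12) = f 6 ^ 2 := by
    linear_combination f 6 * e43 - Dd * f 3 * e46 - f 3 * f 6 * e6
  have h3 : Bb * (f 1 * f 4) = f 2 ^ 2 := by
    linear_combination f 2 * e41 - Bb * f 1 * e42 - f 1 * f 2 * e5
  have main' : (Gg * (f 1 * f 3 * f 12)) * f 1 = (f 4 * f 6 ^ 2) * f 1 := by
    linear_combination (f 1 * f 4 * f 3 * f 12) * hBD + (f 1 * f 4) * h2
      - (Gg * Cc * Cc * f 3 * f 12) * h3 - (Gg * f 3 * f 12 * (f 1 + Cc * f 2)) * e3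
  have main : Gg * (f 1 * f 3 * f 12) = f 4 * f 6 ^ 2 :=
    mul_right_cancel₀ (f_ne_zero 1 one_pos) main'
  have hu : IsUnit (f 1 * f 3 * f 12) := by
    rw [PowerSeries.isUnit_iff_constantCoeff, map_mul, map_mul,
      ← coeff_zero_eq_constantCoeff, coeff_zero_f 1 one_pos, coeff_zero_f 3 (by omega),
      coeff_zero_f 12 (by omega)]
    norm_num
  rw [mk_PDO_eq, ← hGg]
  calc Gg = Gg * ((f 1 * f 3 * f 12) * Ring.inverse (f 1 * f 3 * f 12)) := by
        rw [Ring.mul_inverse_cancel _ hu, mul_one]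
    _ = (Gg * (f 1 * f 3 * f 12)) * Ring.inverse (f 1 * f 3 * f 12) := by ring
    _ = f 4 * f 6 ^ 2 * Ring.inverse (f 1 * f 3 * f 12) := by rw [main]
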